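/- Suppose N ≥ 2 and all weights equal 1, and fix j ∈ {0,…,m−1}. Assume the fixed-point attempt probability τ(j;p_0) lies in (0,1) for all p_0 ∈ [0,1]. Then the RandomReset throughput S̃(j, p_0) := S(τ(j;p_0), 1) is strictly quasi-concave in p_0 on [0,1]: there exists p_0* ∈ [0,1] such that S̃(j, ·) is strictly increasing on [0, p_0*] and strictly decreasing on [p_0*, 1]. -/

import Mathlib

open Finset

/-- `α_j(c) = (1-c) ∑_{i=j}^m 2^i c^{i-j} + 2^m c^{m-j}`. -/
noncomputable def alphaB (m j : ℕ) (c : ℝ) : ℝ :=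
  (1 - c) * ∑ i ∈ Finset.Icc j m, (2 : ℝ) ^ i * c ^ (i - j) + (2 : ℝ) ^ m * c ^ (m - j)

/-- `κ_0 = 2 / CW_min`. -/
noncomputable def kappa0 (CWmin : ℕ) : ℝ := 2 / (CWmin : ℝ)

/-- A reset distribution `q = (q_0, …, q_m)`. -/
def IsResetDist (m : ℕ) (q : Fin (m + 1) → ℝ) : Prop :=
  (∀ j, 0 ≤ q j) ∧ (∑ j, q j) = 1

/-- Conditional attempt probability `τ̂_c(q) = κ_0 / ∑_j q_j α_j(c)`. -/
noncomputable def tauHatC (m CWmin : ℕ) (q : Fin (m + 1) → ℝ) (c : ℝ) : ℝ :=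
  kappa0 CWmin / ∑ j : Fin (m + 1), q j * alphaB m (j : ℕ) c

/-- RandomReset(j; p₀) conditional attempt probability
`τ_c(j;p₀) = κ_0 / (p₀ α_j(c) + ((1-p₀)/(m-j)) ∑_{i=j+1}^m α_i(c))`. -/
noncomputable def tauRRC (m CWmin : ℕ) (j : ℕ) (p0 c : ℝ) : ℝ :=
  kappa0 CWmin /
    (p0 * alphaB m j c + ((1 - p0) / ((m : ℝ) - (j : ℝ))) * ∑ i ∈ Finset.Icc (j + 1) m, alphaB m i c)

/-- `τ ∈ [0,1]` is the fixed-point attempt probability `τ̂(q)` of the reset distribution `q`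
for `N` nodes: `τ = τ̂_{1-(1-τ)^(N-1)}(q)`. -/
def IsFixedPointQ (m CWmin N : ℕ) (q : Fin (m + 1) → ℝ) (τ : ℝ) : Prop :=
  τ ∈ Set.Icc (0 : ℝ) 1 ∧ τ = tauHatC m CWmin q (1 - (1 - τ) ^ (N - 1))

/-- `τ ∈ [0,1]` is the fixed-point attempt probability `τ(j;p₀)` of the RandomReset(j;p₀)
policy for `N` nodes: `τ = τ_{1-(1-τ)^(N-1)}(j;p₀)`. -/
def IsFixedPointRR (m CWmin N : ℕ) (j : ℕ) (p0 τ : ℝ) : Prop :=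
  τ ∈ Set.Icc (0 : ℝ) 1 ∧ τ = tauRRC m CWmin j p0 (1 - (1 - τ) ^ (N - 1))

/-- System throughput with unit weights: `S(p, 1)` with `P_I = (1-p)^N`, `P_T = N p/(1-p)`. -/
noncomputable def Ssys1 (N : ℕ) (EP σ Ts Tc p : ℝ) : ℝ :=
  EP * ((N : ℝ) * p / (1 - p)) * (1 - p) ^ N /
    ((1 - p) ^ N * σ + ((N : ℝ) * p / (1 - p)) * (1 - p) ^ N * (Ts - Tc)
      + (1 - (1 - p) ^ N) * Tc)

lemma alphaB_top (m : ℕ) (c : ℝ) : alphaB m m c = 2 ^ m * (2 - c) := by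
  simp [alphaB]; ring

lemma alphaB_rec (m i : ℕ) (hi : i < m) (c : ℝ) :
    alphaB m i c = 2 ^ i * (1 - c) + c * alphaB m (i + 1) c := by
  unfold alphaB
  have h1 : Finset.Icc i m = insert i (Finset.Icc (i+1) m) := by
    rw [Finset.Icc_add_one_left_eq_Ioc, Finset.Ioc_insert_left hi.le]
  rw [h1, Finset.sum_insert (by simp)]
  have h2 : ∀ k ∈ Finset.Icc (i+1) m, (2:ℝ)^k * c^(k-i) = c * ((2:ℝ)^k * c^(k-(i+1))) := by
    intro k hk
    have hk1 : i + 1 ≤ k := (Finset.mem_Icc.mp hk).1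
    have : k - i = (k - (i+1)) + 1 := by omega
    rw [this, pow_succ]; ring
  rw [Finset.sum_congr rfl h2, ← Finset.mul_sum]
  have h3 : m - i = (m - (i+1)) + 1 := by omega
  rw [h3, pow_succ, Nat.sub_self, pow_zero]
  ring

lemma alpha_pkg (m : ℕ) : ∀ k i, i + k = m → ∃ D : ℝ → ℝ,
    (∀ c, HasDerivAt (fun x => alphaB m i x) (D c) c) ∧
    (∀ c ∈ Set.Icc (0:ℝ) 1, (2:ℝ)^i ≤ alphaB m i c ∧ 0 ≤ alphaB m i c + D c) := by
  intro k
  induction k with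
  | zero =>
    intro i hi
    have him : i = m := by omega
    subst him
    refine ⟨fun _ => -(2^i), fun c => ?_, fun c hc => ?_⟩
    · simp only [alphaB_top]
      have : HasDerivAt (fun x : ℝ => (2:ℝ)^i * (2 - x)) ((2:ℝ)^i * (0 - 1)) c :=
        (((hasDerivAt_const c (2:ℝ)).sub (hasDerivAt_id c))).const_mul _
      simpa using this
    · rw [alphaB_top]
      have h1 : (0:ℝ) ≤ 2^i * (1 - c) :=
        mul_nonneg (pow_nonneg (by norm_num) i) (by linarith [hc.2])
      have h2 : (0:ℝ) < 2^i := pow_pos (by norm_num) i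
      constructor
      · nlinarith
      · show (0:ℝ) ≤ 2^i * (2 - c) + -(2^i)
        nlinarith
  | succ k ih =>
    intro i hi
    have hilt : i < m := by omega
    obtain ⟨Dn, hDn, hPn⟩ := ih (i+1) (by omega)
    refine ⟨fun c => -(2^i) + (alphaB m (i+1) c + c * Dn c), fun c => ?_, fun c hc => ?_⟩
    · simp only [alphaB_rec m i hilt]
      have h1 : HasDerivAt (fun x : ℝ => (2:ℝ)^i * (1 - x)) ((2:ℝ)^i * (0 - 1)) c :=
        ((hasDerivAt_const c (1:ℝ)).sub (hasDerivAt_id c)).const_mul _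
      have h2 : HasDerivAt (fun x : ℝ => x * alphaB m (i+1) x)
          (1 * alphaB m (i+1) c + c * Dn c) c := (hasDerivAt_id c).mul (hDn c)
      have := h1.fun_add h2
      refine this.congr_deriv ?_
      ring
    · obtain ⟨hA, hAD⟩ := hPn c hc
      rw [alphaB_rec m i hilt]
      have h2 : (2:ℝ)^(i+1) ≤ alphaB m (i+1) c := hA
      have hc0 := hc.1; have hc1 := hc.2
      have hps : (2:ℝ)^(i+1) = 2 * 2^i := by rw [pow_succ]; ring
      have h2i : (0:ℝ) < 2^i := pow_pos (by norm_num) i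
      constructor
      · nlinarith [mul_nonneg hc0 (by nlinarith : (0:ℝ) ≤ alphaB m (i+1) c - 2^(i+1))]
      · show (0:ℝ) ≤ 2^i * (1-c) + c * alphaB m (i+1) c + (-2^i + (alphaB m (i+1) c + c * Dn c))
        have h3 : 0 ≤ c * (alphaB m (i+1) c + Dn c) := mul_nonneg hc0 hAD
        nlinarith

lemma alphaB_lt_succ (m i : ℕ) (hi : i < m) {c : ℝ} (hc : c ∈ Set.Icc (0:ℝ) 1) (hc1 : c < 1) :
    alphaB m i c < alphaB m (i+1) c := by
  obtain ⟨D, hD, hP⟩ := alpha_pkg m (m - (i+1)) (i+1) (by omega)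
  have hA : (2:ℝ)^(i+1) ≤ alphaB m (i+1) c := (hP c hc).1
  rw [alphaB_rec m i hi]
  have hc0 := hc.1
  have hps : (2:ℝ)^(i+1) = 2 * 2^i := by rw [pow_succ]; ring
  have h2i : (0:ℝ) < 2^i := pow_pos (by norm_num) i
  nlinarith [mul_nonneg (by linarith : (0:ℝ) ≤ 1 - c) (by nlinarith : (0:ℝ) ≤ alphaB m (i+1) c - 2^(i+1))]

lemma alphaB_lt (m i k : ℕ) (hik : i < k) (hk : k ≤ m) {c : ℝ} (hc : c ∈ Set.Icc (0:ℝ) 1)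
    (hc1 : c < 1) : alphaB m i c < alphaB m k c := by
  induction k with
  | zero => omega
  | succ k ihk =>
    rcases Nat.lt_or_ge i k with h | h
    · exact (ihk h (by omega)).trans (alphaB_lt_succ m k (by omega) hc hc1)
    · have : i = k := by omega
      subst this
      exact alphaB_lt_succ m i (by omega) hc hc1

lemma bern_aux (t : ℝ) (ht0 : 0 ≤ t) (ht1 : t ≤ 1) :
    ∀ k : ℕ, (1 - t)^k * (1 + k * t) ≤ 1 := by
  intro k
  induction k with
  | zero => simp
  | succ k ih =>
    have h1 : (0:ℝ) ≤ (1-t)^k := pow_nonneg (by linarith) k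
    have h2 : (1 - t) * (1 + (k+1) * t) ≤ 1 + k * t := by nlinarith [mul_nonneg (mul_nonneg (by positivity : (0:ℝ) ≤ (k:ℝ)+1) ht0) ht0]
    calc (1-t)^(k+1) * (1 + (↑(k+1)) * t) = (1-t)^k * ((1-t) * (1 + (k+1)*t)) := by
            push_cast; ring
    _ ≤ (1-t)^k * (1 + k*t) := by nlinarith
    _ ≤ 1 := ih

/-- `k t (1-t)^(k-1) < 1` for `t ∈ [0,1)`, `k ≥ 1`. -/
lemma key_lt_one (k : ℕ) (hk : 1 ≤ k) (t : ℝ) (ht0 : 0 ≤ t) (ht1 : t < 1) :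
    (k : ℝ) * t * (1 - t)^(k-1) < 1 := by
  have hb := bern_aux t ht0 ht1.le (k-1)
  have hp : (0:ℝ) ≤ (1-t)^(k-1) := pow_nonneg (by linarith) _
  have hkk : ((k:ℝ) - 1) = ((k-1 : ℕ) : ℝ) := by
    have : (1:ℕ) ≤ k := hk
    push_cast [Nat.cast_sub this]; ring
  have hpos : (0:ℝ) < 1 + ((k-1:ℕ):ℝ) * t := by positivity
  -- (1-t)^(k-1) ≤ 1/(1+(k-1)t)
  have h1 : (1-t)^(k-1) * (1 + ((k-1:ℕ):ℝ) * t) ≤ 1 := hb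
  -- k t < 1 + (k-1) t  ⟺ t < 1
  have h2 : (k:ℝ) * t < 1 + ((k-1:ℕ):ℝ) * t := by
    rw [← hkk]; nlinarith
  have hkt : (0:ℝ) ≤ (k:ℝ) * t := mul_nonneg (Nat.cast_nonneg k) ht0
  have h3 : (k:ℝ) * t * ((1-t)^(k-1) * (1 + ((k-1:ℕ):ℝ) * t)) ≤ (k:ℝ) * t * 1 :=
    mul_le_mul_of_nonneg_left h1 hkt
  nlinarith [mul_pos hpos hpos]

noncomputable def Dfun (m j : ℕ) (p0 c : ℝ) : ℝ :=
  p0 * alphaB m j c + ((1 - p0) / ((m : ℝ) - (j : ℝ))) * ∑ i ∈ Finset.Icc (j + 1) m, alphaB m i c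

lemma cfun_mem (N : ℕ) (hN : 2 ≤ N) {τ : ℝ} (hτ0 : 0 ≤ τ) (hτ1 : τ ≤ 1) :
    (1 - (1-τ)^(N-1)) ∈ Set.Icc (0:ℝ) 1 ∧ (τ < 1 → 1 - (1-τ)^(N-1) < 1) := by
  have h0 : (0:ℝ) ≤ 1 - τ := by linarith
  have h1 : (1 - τ : ℝ) ≤ 1 := by linarith
  have hle : (1-τ:ℝ)^(N-1) ≤ 1 := pow_le_one₀ h0 h1
  have hge : (0:ℝ) ≤ (1-τ)^(N-1) := pow_nonneg h0 _
  refine ⟨⟨by linarith, by linarith⟩, fun hlt => ?_⟩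
  have : (0:ℝ) < (1-τ)^(N-1) := pow_pos (by linarith) _
  linarith

lemma phi_strictMono (m N j : ℕ) (hN : 2 ≤ N) (hj : j < m) (p0 : ℝ)
    (hp0 : p0 ∈ Set.Icc (0:ℝ) 1) :
    StrictMonoOn (fun τ => τ * Dfun m j p0 (1 - (1-τ)^(N-1))) (Set.Icc (0:ℝ) 1) := by
  have hpkg : ∀ i : ℕ, ∃ D : ℝ → ℝ, i ≤ m →
      (∀ c, HasDerivAt (fun x => alphaB m i x) (D c) c) ∧
      (∀ c ∈ Set.Icc (0:ℝ) 1, (2:ℝ)^i ≤ alphaB m i c ∧ 0 ≤ alphaB m i c + D c) := by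
    intro i
    by_cases hi : i ≤ m
    · obtain ⟨D, hD⟩ := alpha_pkg m (m - i) i (by omega)
      exact ⟨D, fun _ => hD⟩
    · exact ⟨fun _ => 0, fun h => absurd h hi⟩
  choose Dd hDd using hpkg
  set w : ℝ := (1 - p0) / ((m : ℝ) - (j : ℝ)) with hw
  set cf : ℝ → ℝ := fun τ => 1 - (1-τ)^(N-1) with hcf
  set cd : ℝ → ℝ := fun τ => ((N:ℝ) - 1) * (1-τ)^(N-2) with hcd
  -- derivative of cf
  have hcder : ∀ τ, HasDerivAt cf (cd τ) τ := by
    intro τ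
    have h1 := (((hasDerivAt_const τ (1:ℝ)).fun_sub (hasDerivAt_id' τ))).fun_pow (N-1)
    have h2 := h1.const_sub 1
    refine h2.congr_deriv ?_
    have : N - 1 - 1 = N - 2 := by omega
    rw [this]
    have : ((N - 1 : ℕ) : ℝ) = (N:ℝ) - 1 := by
      have : (1:ℕ) ≤ N := by omega
      push_cast [Nat.cast_sub this]; ring
    rw [this]; ring
  -- derivative of the whole φ
  have hder : ∀ τ, HasDerivAt (fun τ => τ * Dfun m j p0 (cf τ))
      (Dfun m j p0 (cf τ) + τ * (p0 * (Dd j (cf τ) * cd τ)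
        + w * ∑ i ∈ Finset.Icc (j+1) m, Dd i (cf τ) * cd τ)) τ := by
    intro τ
    have hin : HasDerivAt (fun τ => Dfun m j p0 (cf τ))
        (p0 * (Dd j (cf τ) * cd τ) + w * ∑ i ∈ Finset.Icc (j+1) m, Dd i (cf τ) * cd τ) τ := by
      have hj' : ∀ i, i ≤ m → HasDerivAt (fun τ => alphaB m i (cf τ)) (Dd i (cf τ) * cd τ) τ :=
        fun i hi => ((hDd i hi).1 (cf τ)).comp τ (hcder τ)
      have hsum : HasDerivAt (fun τ => ∑ i ∈ Finset.Icc (j+1) m, alphaB m i (cf τ))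
          (∑ i ∈ Finset.Icc (j+1) m, Dd i (cf τ) * cd τ) τ := by
        apply HasDerivAt.fun_sum
        intro i hi
        exact hj' i (Finset.mem_Icc.mp hi).2
      exact ((hj' j hj.le).const_mul p0).add (hsum.const_mul w)
    have := (hasDerivAt_id' τ).fun_mul hin
    simpa [Dfun, one_mul] using this
  -- positivity of derivative on the interior
  have hpos : ∀ τ ∈ Set.Ioo (0:ℝ) 1,
      0 < Dfun m j p0 (cf τ) + τ * (p0 * (Dd j (cf τ) * cd τ)
        + w * ∑ i ∈ Finset.Icc (j+1) m, Dd i (cf τ) * cd τ) := by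
    intro τ hτ
    obtain ⟨hτ0, hτ1⟩ := hτ
    set c := cf τ with hc
    have hcmem := (cfun_mem N hN hτ0.le hτ1.le).1
    have hcd0 : 0 ≤ cd τ := by
      have : (0:ℝ) ≤ (1-τ)^(N-2) := pow_nonneg (by linarith) _
      have hN1 : (0:ℝ) ≤ (N:ℝ) - 1 := by
        have : (2:ℝ) ≤ (N:ℝ) := by exact_mod_cast hN
        linarith
      exact mul_nonneg hN1 this
    have htcd : τ * cd τ < 1 := by
      have := key_lt_one (N-1) (by omega) τ hτ0.le hτ1
      have heq : ((N-1:ℕ):ℝ) = (N:ℝ) - 1 := by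
        have : (1:ℕ) ≤ N := by omega
        push_cast [Nat.cast_sub this]; ring
      have heq2 : (N-1) - 1 = N - 2 := by omega
      rw [heq2, heq] at this
      calc τ * cd τ = ((N:ℝ)-1) * τ * (1-τ)^(N-2) := by rw [hcd]; ring
      _ < 1 := this
    have hE : ∀ i, i ≤ m → 0 < alphaB m i c + τ * (Dd i c * cd τ) := by
      intro i hi
      obtain ⟨hDer, hP⟩ := hDd i hi
      obtain ⟨hA, hAD⟩ := hP c hcmem
      have hApos : (0:ℝ) < alphaB m i c := lt_of_lt_of_le (pow_pos (by norm_num) i) hA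
      rcases le_or_gt 0 (Dd i c) with hs | hs
      · have : 0 ≤ τ * (Dd i c * cd τ) := mul_nonneg hτ0.le (mul_nonneg hs hcd0)
        linarith
      · have h1 : τ * (Dd i c * cd τ) = (τ * cd τ) * Dd i c := by ring
        have h2 : (τ * cd τ) * Dd i c > 1 * Dd i c := by
          apply mul_lt_mul_of_neg_right htcd hs
        rw [h1]
        nlinarith
    -- assemble
    have hwnn : 0 ≤ w := by
      have hmj : (0:ℝ) < (m:ℝ) - (j:ℝ) := by
        have : (j:ℝ) < (m:ℝ) := by exact_mod_cast hj
        linarith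
      exact div_nonneg (by linarith [hp0.2]) hmj.le
    have key : Dfun m j p0 c + τ * (p0 * (Dd j c * cd τ)
        + w * ∑ i ∈ Finset.Icc (j+1) m, Dd i c * cd τ)
        = p0 * (alphaB m j c + τ * (Dd j c * cd τ))
          + w * ∑ i ∈ Finset.Icc (j+1) m, (alphaB m i c + τ * (Dd i c * cd τ)) := by
      unfold Dfun
      simp only [← hw, Finset.sum_add_distrib, ← Finset.mul_sum]
      ring
    rw [key]
    have hne : (Finset.Icc (j+1) m).Nonempty := Finset.nonempty_Icc.mpr (by omega)
    have hsumE : 0 < ∑ i ∈ Finset.Icc (j+1) m, (alphaB m i c + τ * (Dd i c * cd τ)) :=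
      Finset.sum_pos (fun i hi => hE i (Finset.mem_Icc.mp hi).2) hne
    rcases eq_or_lt_of_le hp0.1 with hp | hp
    · have hwpos : 0 < w := by
        rw [hw, ← hp]
        have hmj : (0:ℝ) < (m:ℝ) - (j:ℝ) := by
          have : (j:ℝ) < (m:ℝ) := by exact_mod_cast hj
          linarith
        positivity
      have h1 : 0 < w * ∑ i ∈ Finset.Icc (j+1) m, (alphaB m i c + τ * (Dd i c * cd τ)) :=
        mul_pos hwpos hsumE
      rw [← hp]
      linarith
    · have h1 : 0 < p0 * (alphaB m j c + τ * (Dd j c * cd τ)) := mul_pos hp (hE j hj.le)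
      have h2 : 0 ≤ w * ∑ i ∈ Finset.Icc (j+1) m, (alphaB m i c + τ * (Dd i c * cd τ)) :=
        mul_nonneg hwnn hsumE.le
      linarith
  exact strictMonoOn_of_deriv_pos (convex_Icc 0 1)
    (fun x _ => (hder x).continuousAt.continuousWithinAt)
    (fun x hx => by
      rw [(hder x).deriv]
      rw [interior_Icc] at hx
      exact hpos x hx)

lemma tauRRC_eq_div (m CWmin j : ℕ) (p0 c : ℝ) :
    tauRRC m CWmin j p0 c = (2 / (CWmin : ℝ)) / Dfun m j p0 c := rfl

lemma Dfun_anti (m j : ℕ) (hj : j < m) {c : ℝ} (hc : c ∈ Set.Icc (0:ℝ) 1) (hc1 : c < 1)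
    {p0 p0' : ℝ} (hlt : p0 < p0') : Dfun m j p0' c < Dfun m j p0 c := by
  have hne : (Finset.Icc (j+1) m).Nonempty := Finset.nonempty_Icc.mpr (by omega)
  have hsum : ((m:ℝ) - (j:ℝ)) * alphaB m j c < ∑ i ∈ Finset.Icc (j+1) m, alphaB m i c := by
    have h1 : ∑ _i ∈ Finset.Icc (j+1) m, alphaB m j c < ∑ i ∈ Finset.Icc (j+1) m, alphaB m i c :=
      Finset.sum_lt_sum_of_nonempty hne
        (fun i hi => alphaB_lt m j i (by exact (Finset.mem_Icc.mp hi).1) (Finset.mem_Icc.mp hi).2 hc hc1)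
    have h2 : ∑ _i ∈ Finset.Icc (j+1) m, alphaB m j c
        = ((m:ℝ) - (j:ℝ)) * alphaB m j c := by
      rw [Finset.sum_const, Nat.card_Icc]
      have : m + 1 - (j+1) = m - j := by omega
      rw [this]
      have : ((m - j : ℕ) : ℝ) = (m:ℝ) - (j:ℝ) := by
        push_cast [Nat.cast_sub hj.le]; ring
      rw [nsmul_eq_mul, this]
    linarith
  have hmj : (0:ℝ) < (m:ℝ) - (j:ℝ) := by
    have : (j:ℝ) < (m:ℝ) := by exact_mod_cast hj
    linarith
  unfold Dfun
  set S := ∑ i ∈ Finset.Icc (j+1) m, alphaB m i c with hSdef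
  set M := (m:ℝ) - (j:ℝ) with hMdef
  have hS : alphaB m j c < S / M := by rw [lt_div_iff₀ hmj]; nlinarith
  have e1 : (1 - p0') / M * S = (1-p0') * (S/M) := by ring
  have e2 : (1 - p0) / M * S = (1-p0) * (S/M) := by ring
  rw [e1, e2]
  nlinarith [mul_pos (sub_pos.mpr hlt) (sub_pos.mpr hS)]

lemma fp_facts (m CWmin N j : ℕ) (hCW : 2 ≤ CWmin) {p0 τ : ℝ} (hτ : τ ∈ Set.Ioo (0:ℝ) 1)
    (hfp : τ = tauRRC m CWmin j p0 (1 - (1-τ)^(N-1))) :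
    0 < Dfun m j p0 (1 - (1-τ)^(N-1)) ∧
      τ * Dfun m j p0 (1 - (1-τ)^(N-1)) = 2 / (CWmin : ℝ) := by
  have hκ : (0:ℝ) < 2 / (CWmin : ℝ) := by
    have : (0:ℝ) < (CWmin:ℝ) := by
      have : (2:ℝ) ≤ (CWmin:ℝ) := by exact_mod_cast hCW
      linarith
    positivity
  rw [tauRRC_eq_div] at hfp
  set D := Dfun m j p0 (1 - (1-τ)^(N-1)) with hD
  rcases lt_trichotomy D 0 with h | h | h
  · exfalso
    have : τ < 0 := hfp ▸ div_neg_of_pos_of_neg hκ h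
    linarith [hτ.1]
  · exfalso
    rw [h, div_zero] at hfp
    linarith [hτ.1, hfp]
  · refine ⟨h, ?_⟩
    rw [hfp]
    field_simp

section Tlemmas

variable (m CWmin N j : ℕ) (hm : 1 ≤ m) (hCW : 2 ≤ CWmin) (hN : 2 ≤ N) (j : ℕ) (hj : j < m)
variable (T : ℝ → ℝ)

lemma T_strictMono (hj : j < m) (hN : 2 ≤ N) (hCW : 2 ≤ CWmin)
    (hT : ∀ p0 ∈ Set.Icc (0 : ℝ) 1, T p0 ∈ Set.Ioo (0 : ℝ) 1 ∧
      T p0 = tauRRC m CWmin j p0 (1 - (1 - T p0) ^ (N - 1))) :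
    StrictMonoOn T (Set.Icc (0:ℝ) 1) := by
  intro x hx y hy hxy
  by_contra hle
  push_neg at hle
  obtain ⟨hTx, hfpx⟩ := hT x hx
  obtain ⟨hTy, hfpy⟩ := hT y hy
  obtain ⟨hDx, hEx⟩ := fp_facts m CWmin N j hCW hTx hfpx
  obtain ⟨hDy, hEy⟩ := fp_facts m CWmin N j hCW hTy hfpy
  -- φ_y monotone
  have hmono := (phi_strictMono m N j hN hj y hy).monotoneOn
  have h1 : T y * Dfun m j y (1 - (1 - T y)^(N-1)) ≤ T x * Dfun m j y (1 - (1 - T x)^(N-1)) :=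
    hmono ⟨hTy.1.le, hTy.2.le⟩ ⟨hTx.1.le, hTx.2.le⟩ hle
  have hcx := cfun_mem N hN hTx.1.le hTx.2.le
  have h2 : Dfun m j y (1 - (1 - T x)^(N-1)) < Dfun m j x (1 - (1 - T x)^(N-1)) :=
    Dfun_anti m j hj hcx.1 (hcx.2 hTx.2) hxy
  have h3 : T x * Dfun m j y (1 - (1 - T x)^(N-1)) < T x * Dfun m j x (1 - (1 - T x)^(N-1)) :=
    mul_lt_mul_of_pos_left h2 hTx.1
  rw [hEx] at h3
  rw [hEy] at h1
  linarith

lemma T_continuousOn (hj : j < m) (hN : 2 ≤ N) (hCW : 2 ≤ CWmin)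
    (hT : ∀ p0 ∈ Set.Icc (0 : ℝ) 1, T p0 ∈ Set.Ioo (0 : ℝ) 1 ∧
      T p0 = tauRRC m CWmin j p0 (1 - (1 - T p0) ^ (N - 1))) :
    ContinuousOn T (Set.Icc (0:ℝ) 1) := by
  intro p0 hp0
  obtain ⟨hτ, hfp⟩ := hT p0 hp0
  obtain ⟨hD, hE⟩ := fp_facts m CWmin N j hCW hτ hfp
  set τ := T p0 with hτdef
  unfold ContinuousWithinAt
  rw [Metric.tendsto_nhds]
  intro ε hε
  set ε' : ℝ := min (ε/2) (min (τ/2) ((1-τ)/2)) with hε'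
  have hε'pos : 0 < ε' := by
    have := hτ.1; have := hτ.2
    simp only [hε', lt_min_iff]
    refine ⟨by linarith, by linarith, by linarith⟩
  have hmem1 : τ - ε' ∈ Set.Icc (0:ℝ) 1 := by
    have h1 : ε' ≤ τ/2 := (min_le_right _ _).trans (min_le_left _ _)
    have := hτ.1; have := hτ.2
    constructor <;> [skip; skip] <;> nlinarith
  have hmem2 : τ + ε' ∈ Set.Icc (0:ℝ) 1 := by
    have h1 : ε' ≤ (1-τ)/2 := (min_le_right _ _).trans (min_le_right _ _)
    have := hτ.1; have := hτ.2
    constructor <;> nlinarith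
  have hτmem : τ ∈ Set.Icc (0:ℝ) 1 := ⟨hτ.1.le, hτ.2.le⟩
  -- φ at parameter q, point t
  set F : ℝ → ℝ → ℝ := fun q t => t * Dfun m j q (1 - (1-t)^(N-1)) with hF
  have hlow : F p0 (τ - ε') < 2 / (CWmin:ℝ) := by
    have := (phi_strictMono m N j hN hj p0 hp0) hmem1 hτmem (by linarith)
    rw [← hE]
    exact this
  have hhigh : (2:ℝ) / (CWmin:ℝ) < F p0 (τ + ε') := by
    have := (phi_strictMono m N j hN hj p0 hp0) hτmem hmem2 (by linarith)
    rw [← hE]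
    exact this
  have hcont : ∀ t : ℝ, Continuous (fun q => F q t) := by
    intro t
    unfold F
    unfold Dfun
    fun_prop
  have ev1 : ∀ᶠ q in nhdsWithin p0 (Set.Icc (0:ℝ) 1), F q (τ - ε') < 2 / (CWmin:ℝ) :=
    (((hcont (τ - ε')).continuousAt (x := p0)).eventually_lt_const hlow).filter_mono
      nhdsWithin_le_nhds
  have ev2 : ∀ᶠ q in nhdsWithin p0 (Set.Icc (0:ℝ) 1), 2 / (CWmin:ℝ) < F q (τ + ε') :=
    (((hcont (τ + ε')).continuousAt (x := p0)).eventually_const_lt hhigh).filter_mono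
      nhdsWithin_le_nhds
  filter_upwards [ev1, ev2, self_mem_nhdsWithin] with q h1 h2 hq
  obtain ⟨hτq, hfpq⟩ := hT q hq
  obtain ⟨hDq, hEq⟩ := fp_facts m CWmin N j hCW hτq hfpq
  have hmonoq := phi_strictMono m N j hN hj q hq
  have hTqmem : T q ∈ Set.Icc (0:ℝ) 1 := ⟨hτq.1.le, hτq.2.le⟩
  have hlt1 : τ - ε' < T q := by
    by_contra hc
    push_neg at hc
    have := (hmonoq.monotoneOn) hTqmem hmem1 hc
    simp only at this
    rw [hEq] at this
    exact absurd (lt_of_le_of_lt this h1) (lt_irrefl _)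
  have hlt2 : T q < τ + ε' := by
    by_contra hc
    push_neg at hc
    have := (hmonoq.monotoneOn) hmem2 hTqmem hc
    simp only at this
    rw [hEq] at this
    exact absurd (lt_of_lt_of_le h2 this) (lt_irrefl _)
  rw [Real.dist_eq, abs_lt]
  have hε'2 : ε' ≤ ε/2 := min_le_left _ _
  constructor <;> nlinarith

end Tlemmas

noncomputable def gHat (N : ℕ) (σ Tc u : ℝ) : ℝ :=
  (Tc / N) * ∑ i ∈ Finset.range N, u ^ i + (σ / N) * (u - 1)⁻¹

lemma Ssys1_rw (N : ℕ) (hN : 2 ≤ N) (EP σ Ts Tc : ℝ) (hσ : 0 < σ) (hTc : σ ≤ Tc)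
    (hTs : Tc ≤ Ts) {p : ℝ} (hp : p ∈ Set.Ioo (0:ℝ) 1) :
    0 < Ts - Tc + gHat N σ Tc (1-p)⁻¹ ∧
    Ssys1 N EP σ Ts Tc p = EP / (Ts - Tc + gHat N σ Tc (1-p)⁻¹) := by
  obtain ⟨hp0, hp1⟩ := hp
  set q : ℝ := 1 - p with hqdef
  have hq0 : 0 < q := by simp [hqdef]; linarith
  have hq1 : q < 1 := by simp [hqdef]; linarith
  have hNpos : (0:ℝ) < (N:ℝ) := by
    have : (2:ℝ) ≤ (N:ℝ) := by exact_mod_cast hN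
    linarith
  have hu : (1:ℝ) < q⁻¹ := (one_lt_inv₀ hq0).mpr hq1
  have hu1 : q⁻¹ ≠ (1:ℝ) := ne_of_gt hu
  have hgeom : ∑ i ∈ Finset.range N, (q⁻¹) ^ i = ((q⁻¹)^N - 1)/(q⁻¹ - 1) :=
    geom_sum_eq hu1 N
  set A : ℝ := q ^ (N-1) with hAdef
  have hA : A * q = q ^ N := by
    rw [hAdef, ← pow_succ]
    congr 1
    omega
  have hApos : 0 < A := pow_pos hq0 _
  have hqN1 : q ^ N ≤ 1 := pow_le_one₀ hq0.le hq1.le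
  have hqNpos : 0 < q ^ N := pow_pos hq0 _
  have hDenSpos0 : 0 < q ^ N * σ + ((N:ℝ) * p / q) * q ^ N * (Ts - Tc) + (1 - q ^ N) * Tc := by
    have h1 : 0 < q ^ N * σ := mul_pos hqNpos hσ
    have h2 : 0 ≤ ((N:ℝ) * p / q) * q ^ N * (Ts - Tc) := by
      apply mul_nonneg
      apply mul_nonneg
      · positivity
      · exact hqNpos.le
      · linarith
    have h3 : 0 ≤ (1 - q ^ N) * Tc := mul_nonneg (by linarith) (by linarith)
    linarith
  set DenS : ℝ := q ^ N * σ + ((N:ℝ) * p / q) * q ^ N * (Ts - Tc) + (1 - q ^ N) * Tc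
    with hDenS
  have hDenSpos : 0 < DenS := hDenSpos0
  have hinvpow : (q⁻¹)^N = (A * q)⁻¹ := by rw [inv_pow, hA]
  have hkey : (Ts - Tc + gHat N σ Tc q⁻¹) * ((N:ℝ) * p * A) = DenS := by
    unfold gHat
    rw [hgeom, hinvpow, hDenS, ← hA]
    have hqq : q⁻¹ - 1 = p / q := by
      rw [hqdef]
      field_simp
      ring
    rw [hqq]
    field_simp
    ring
  have hNpA : 0 < (N:ℝ) * p * A := by positivity
  have hpos : 0 < Ts - Tc + gHat N σ Tc q⁻¹ := by
    by_contra hX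
    push_neg at hX
    have hmn := mul_le_mul_of_nonneg_right hX hNpA.le
    rw [hkey, zero_mul] at hmn
    linarith
  refine ⟨hpos, ?_⟩
  unfold Ssys1
  rw [← hqdef, ← hDenS]
  rw [eq_div_iff (ne_of_gt hpos), div_mul_eq_mul_div, div_eq_iff (ne_of_gt hDenSpos)]
  rw [← hkey, ← hA]
  field_simp

lemma inv_sub_one_strictConvexOn : StrictConvexOn ℝ (Set.Ioi (1:ℝ)) (fun u => (u - 1)⁻¹) := by
  refine ⟨convex_Ioi 1, ?_⟩
  intro x hx y hy hxy a b ha hb hab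
  simp only [smul_eq_mul]
  have hb' : b = 1 - a := by linarith
  subst hb'
  have hX : (0:ℝ) < x - 1 := by simpa using hx
  have hY : (0:ℝ) < y - 1 := by simpa using hy
  have hpos : 0 < a * x + (1-a) * y - 1 := by nlinarith
  have h2 : 0 < ((x-1) - (y-1))^2 := by
    have : (x-1) - (y-1) ≠ 0 := by intro h; exact hxy (by linarith)
    positivity
  have hrhs : a * (x-1)⁻¹ + (1-a) * (y-1)⁻¹ = (a * (y-1) + (1-a) * (x-1))/((x-1) * (y-1)) := by
    field_simp
  rw [hrhs, inv_eq_one_div, div_lt_div_iff₀ hpos (mul_pos hX hY)]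
  nlinarith [mul_pos (mul_pos ha hb) h2]

lemma pow_sum_convexOn (s : Finset ℕ) :
    ConvexOn ℝ (Set.Ioi (1:ℝ)) (fun u : ℝ => ∑ i ∈ s, u ^ i) := by
  classical
  induction s using Finset.induction_on with
  | empty => simpa using convexOn_const (0:ℝ) (convex_Ioi 1)
  | insert a s' ha ih =>
    have hpow : ConvexOn ℝ (Set.Ioi (1:ℝ)) (fun u : ℝ => u ^ a) :=
      (convexOn_pow a).subset (fun u hu => Set.mem_Ici.mpr (le_of_lt (lt_trans zero_lt_one hu))) (convex_Ioi 1)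
    simpa [Finset.sum_insert ha] using (show ConvexOn ℝ (Set.Ioi (1:ℝ)) (fun u : ℝ => u ^ a + ∑ i ∈ s', u ^ i) from hpow.add ih)

lemma gHat_strictConvexOn (N : ℕ) (σ Tc : ℝ) (hσ : 0 < σ) (hTc : σ ≤ Tc) (hN : 2 ≤ N) :
    StrictConvexOn ℝ (Set.Ioi (1:ℝ)) (gHat N σ Tc) := by
  have hNpos : (0:ℝ) < (N:ℝ) := by
    have : (2:ℝ) ≤ (N:ℝ) := by exact_mod_cast hN
    linarith
  have hTcpos : 0 < Tc := lt_of_lt_of_le hσ hTc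
  have h1 : ConvexOn ℝ (Set.Ioi (1:ℝ)) (fun u : ℝ => (Tc / N) * ∑ i ∈ Finset.range N, u ^ i) := by
    have := (pow_sum_convexOn (Finset.range N)).smul
      (c := Tc / N) (div_nonneg hTcpos.le hNpos.le)
    simpa [smul_eq_mul] using this
  have h2 : StrictConvexOn ℝ (Set.Ioi (1:ℝ)) (fun u : ℝ => (σ / N) * (u - 1)⁻¹) := by
    refine ⟨convex_Ioi 1, fun x hx y hy hxy a b ha hb hab => ?_⟩
    have h := inv_sub_one_strictConvexOn.2 hx hy hxy ha hb hab
    simp only [smul_eq_mul] at h ⊢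
    have hc : 0 < σ/(N:ℝ) := div_pos hσ hNpos
    calc (σ/(N:ℝ)) * ((a*x+b*y) - 1)⁻¹ < (σ/(N:ℝ)) * (a*(x-1)⁻¹ + b*(y-1)⁻¹) :=
          mul_lt_mul_of_pos_left h hc
    _ = a*((σ/(N:ℝ))*(x-1)⁻¹) + b*((σ/(N:ℝ))*(y-1)⁻¹) := by ring
  have hadd := h1.add_strictConvexOn h2
  unfold gHat
  exact hadd

lemma gHat_pos (N : ℕ) (σ Tc : ℝ) (hσ : 0 < σ) (hTc : σ ≤ Tc) (hN : 2 ≤ N)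
    {u : ℝ} (hu : 1 < u) : 0 < gHat N σ Tc u := by
  have hNpos : (0:ℝ) < (N:ℝ) := by
    have : (2:ℝ) ≤ (N:ℝ) := by exact_mod_cast hN
    linarith
  have hsum : 0 < ∑ i ∈ Finset.range N, u ^ i :=
    Finset.sum_pos (fun i _ => pow_pos (by linarith) i) ⟨0, Finset.mem_range.mpr (by omega)⟩
  have h2 : 0 < (u - 1)⁻¹ := by
    have : 0 < u - 1 := by linarith
    positivity
  unfold gHat
  have hTcpos : 0 < Tc := lt_of_lt_of_le hσ hTc
  exact add_pos (mul_pos (div_pos hTcpos hNpos) hsum) (mul_pos (div_pos hσ hNpos) h2)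

lemma quasi_split (G : ℝ → ℝ) (hGcont : ContinuousOn G (Set.Icc 0 1))
    (hq : ∀ x ∈ Set.Icc (0:ℝ) 1, ∀ y ∈ Set.Icc (0:ℝ) 1, ∀ z ∈ Set.Icc (0:ℝ) 1,
      x < y → y < z → G y < max (G x) (G z)) :
    ∃ p ∈ Set.Icc (0:ℝ) 1, StrictAntiOn G (Set.Icc 0 p) ∧ StrictMonoOn G (Set.Icc p 1) := by
  obtain ⟨p, hp, hmin⟩ :=
    isCompact_Icc.exists_isMinOn (Set.nonempty_Icc.mpr zero_le_one) hGcont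
  rw [isMinOn_iff] at hmin
  refine ⟨p, hp, ?_, ?_⟩
  · intro x hx y hy hxy
    have hx01 : x ∈ Set.Icc (0:ℝ) 1 := ⟨hx.1, hx.2.trans hp.2⟩
    have hy01 : y ∈ Set.Icc (0:ℝ) 1 := ⟨hy.1, hy.2.trans hp.2⟩
    rcases lt_or_eq_of_le hy.2 with h | h
    · have hlt := hq x hx01 y hy01 p hp hxy h
      rcases lt_max_iff.mp hlt with h' | h'
      · exact h'
      · exact absurd h' (not_lt.mpr (hmin y hy01))
    · subst h
      by_contra hc
      push_neg at hc
      have heq : G x = G y := le_antisymm hc (hmin x hx01)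
      set z := (x + y)/2 with hz
      have hz1 : x < z := by rw [hz]; linarith
      have hz2 : z < y := by rw [hz]; linarith
      have hz01 : z ∈ Set.Icc (0:ℝ) 1 := ⟨by linarith [hx.1], by linarith [hy01.2]⟩
      have := hq x hx01 z hz01 y hy01 hz1 hz2
      rw [heq, max_self] at this
      exact absurd this (not_lt.mpr (hmin z hz01))
  · intro x hx y hy hxy
    have hx01 : x ∈ Set.Icc (0:ℝ) 1 := ⟨hp.1.trans hx.1, hx.2⟩
    have hy01 : y ∈ Set.Icc (0:ℝ) 1 := ⟨hp.1.trans hy.1, hy.2⟩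
    rcases lt_or_eq_of_le hx.1 with h | h
    · have hlt := hq p hp x hx01 y hy01 h hxy
      rcases lt_max_iff.mp hlt with h' | h'
      · exact absurd h' (not_lt.mpr (hmin x hx01))
      · exact h'
    · subst h
      by_contra hc
      push_neg at hc
      have heq : G y = G p := le_antisymm hc (hmin y hy01)
      set z := (p + y)/2 with hz
      have hz1 : p < z := by rw [hz]; linarith
      have hz2 : z < y := by rw [hz]; linarith
      have hz01 : z ∈ Set.Icc (0:ℝ) 1 := ⟨by linarith [hp.1], by linarith [hy01.2]⟩
      have hfin := hq p hp z hz01 y hy01 hz1 hz2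
      rw [heq, max_self] at hfin
      exact absurd hfin (not_lt.mpr (hmin z hz01))


/-- With unit weights and a fixed `j ∈ {0,…,m-1}`, assuming the fixed-point attempt
probability `τ(j;p₀)` lies in `(0,1)` for all `p₀ ∈ [0,1]`, the RandomReset throughput
`S̃(j,p₀) = S(τ(j;p₀), 1)` is strictly quasi-concave in `p₀` on `[0,1]`: it is strictly
increasing up to some `p₀*` and strictly decreasing afterwards. -/
theorem RR_throughput_quasiconcave (m CWmin N : ℕ) (hm : 1 ≤ m) (hCW : 2 ≤ CWmin)
    (hN : 2 ≤ N) (EP σ Ts Tc : ℝ)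
    (hEP : 0 < EP) (hσ : 0 < σ) (hTc : σ ≤ Tc) (hTs : Tc ≤ Ts)
    (j : ℕ) (hj : j < m) (T : ℝ → ℝ)
    (hT : ∀ p0 ∈ Set.Icc (0 : ℝ) 1,
      T p0 ∈ Set.Ioo (0 : ℝ) 1 ∧ IsFixedPointRR m CWmin N j p0 (T p0)) :
    ∃ p0star ∈ Set.Icc (0 : ℝ) 1,
      StrictMonoOn (fun p0 => Ssys1 N EP σ Ts Tc (T p0)) (Set.Icc 0 p0star) ∧
      StrictAntiOn (fun p0 => Ssys1 N EP σ Ts Tc (T p0)) (Set.Icc p0star 1) := by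


  have hT' : ∀ p0 ∈ Set.Icc (0:ℝ) 1, T p0 ∈ Set.Ioo (0:ℝ) 1 ∧
      T p0 = tauRRC m CWmin j p0 (1 - (1 - T p0)^(N-1)) :=
    fun p0 hp0 => ⟨(hT p0 hp0).1, (hT p0 hp0).2.2⟩
  have hTmono := T_strictMono m CWmin N j T hj hN hCW hT'
  have hTcont := T_continuousOn m CWmin N j T hj hN hCW hT'
  have hTmem : ∀ p0 ∈ Set.Icc (0:ℝ) 1, T p0 ∈ Set.Ioo (0:ℝ) 1 := fun p0 h => (hT p0 h).1
  set U : ℝ → ℝ := fun p0 => (1 - T p0)⁻¹ with hUdef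
  have hU1 : ∀ p0 ∈ Set.Icc (0:ℝ) 1, 1 < U p0 := by
    intro p0 h
    obtain ⟨h1, h2⟩ := hTmem p0 h
    rw [hUdef]
    exact (one_lt_inv₀ (by linarith)).mpr (by linarith)
  have hUmono : StrictMonoOn U (Set.Icc (0:ℝ) 1) := by
    intro x hx y hy hxy
    obtain ⟨hx1, hx2⟩ := hTmem x hx
    obtain ⟨hy1, hy2⟩ := hTmem y hy
    have h := hTmono hx hy hxy
    rw [hUdef]
    exact inv_strictAnti₀ (by linarith) (by linarith)
  have hUcont : ContinuousOn U (Set.Icc (0:ℝ) 1) := by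
    apply (continuousOn_const.sub hTcont).inv₀
    intro p0 h
    obtain ⟨h1, h2⟩ := hTmem p0 h
    exact ne_of_gt (by show (0:ℝ) < 1 - T p0; linarith)
  set G : ℝ → ℝ := fun p0 => gHat N σ Tc (U p0) with hGdef
  have hgcont : ContinuousOn (gHat N σ Tc) (Set.Ioi (1:ℝ)) := by
    unfold gHat
    apply ContinuousOn.add
    · exact (continuous_const.mul
        (continuous_finset_sum (Finset.range N) (fun i _ => continuous_pow i))).continuousOn
    · apply ContinuousOn.mul continuousOn_const
      apply ContinuousOn.inv₀ ((continuous_id.sub continuous_const).continuousOn)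
      intro u hu
      have : (1:ℝ) < u := hu
      intro hcon
      have : u - 1 = 0 := hcon
      linarith
  have hGcont : ContinuousOn G (Set.Icc (0:ℝ) 1) :=
    hgcont.comp hUcont (fun p0 h => hU1 p0 h)
  have hquasi : ∀ x ∈ Set.Icc (0:ℝ) 1, ∀ y ∈ Set.Icc (0:ℝ) 1, ∀ z ∈ Set.Icc (0:ℝ) 1,
      x < y → y < z → G y < max (G x) (G z) := by
    intro x hx y hy z hz hxy hyz
    have hab : U x < U y := hUmono hx hy hxy
    have hbc : U y < U z := hUmono hy hz hyz
    have ha1 : 1 < U x := hU1 x hx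
    set a := U x; set b := U y; set c := U z
    have hca : 0 < c - a := by linarith
    set lam := (c - b)/(c - a) with hlam
    set mu := (b - a)/(c - a) with hmu
    have hlampos : 0 < lam := div_pos (by linarith) hca
    have hmupos : 0 < mu := div_pos (by linarith) hca
    have hsum : lam + mu = 1 := by
      rw [hlam, hmu, ← add_div, div_eq_one_iff_eq (ne_of_gt hca)]
      ring
    have hconv := (gHat_strictConvexOn N σ Tc hσ hTc hN).2
      (Set.mem_Ioi.mpr ha1) (Set.mem_Ioi.mpr (by linarith : (1:ℝ) < c))
      (by intro h; rw [h] at hab; linarith) hlampos hmupos hsum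
    simp only [smul_eq_mul] at hconv
    have hbeq : lam * a + mu * c = b := by
      rw [hlam, hmu]
      field_simp
      ring
    rw [hbeq] at hconv
    have hM1 : lam * gHat N σ Tc a ≤ lam * max (G x) (G z) :=
      mul_le_mul_of_nonneg_left (le_max_left _ _) hlampos.le
    have hM2 : mu * gHat N σ Tc c ≤ mu * max (G x) (G z) :=
      mul_le_mul_of_nonneg_left (le_max_right _ _) hmupos.le
    have hMeq : lam * max (G x) (G z) + mu * max (G x) (G z) = max (G x) (G z) := by
      rw [← add_mul, hsum, one_mul]
    show gHat N σ Tc b < max (G x) (G z)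
    linarith
  obtain ⟨p, hp, hanti, hmono⟩ := quasi_split G hGcont hquasi
  refine ⟨p, hp, ?_, ?_⟩
  · intro x hx y hy hxy
    have hx01 : x ∈ Set.Icc (0:ℝ) 1 := ⟨hx.1, hx.2.trans hp.2⟩
    have hy01 : y ∈ Set.Icc (0:ℝ) 1 := ⟨hy.1, hy.2.trans hp.2⟩
    obtain ⟨hpx, hex⟩ := Ssys1_rw N hN EP σ Ts Tc hσ hTc hTs (hTmem x hx01)
    obtain ⟨hpy, hey⟩ := Ssys1_rw N hN EP σ Ts Tc hσ hTc hTs (hTmem y hy01)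
    show Ssys1 N EP σ Ts Tc (T x) < Ssys1 N EP σ Ts Tc (T y)
    rw [hex, hey]
    have hGlt : G y < G x := hanti hx hy hxy
    exact div_lt_div_of_pos_left hEP hpy (by linarith)
  · intro x hx y hy hxy
    have hx01 : x ∈ Set.Icc (0:ℝ) 1 := ⟨hp.1.trans hx.1, hx.2⟩
    have hy01 : y ∈ Set.Icc (0:ℝ) 1 := ⟨hp.1.trans hy.1, hy.2⟩
    obtain ⟨hpx, hex⟩ := Ssys1_rw N hN EP σ Ts Tc hσ hTc hTs (hTmem x hx01)
    obtain ⟨hpy, hey⟩ := Ssys1_rw N hN EP σ Ts Tc hσ hTc hTs (hTmem y hy01)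
    show Ssys1 N EP σ Ts Tc (T y) < Ssys1 N EP σ Ts Tc (T x)
    rw [hex, hey]
    have hGlt : G x < G y := hmono hx hy hxy
    exact div_lt_div_of_pos_left hEP hpx (by linarith)
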